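/- Let S be a folding string. Then: (i) the bi-infinite sequences (σ(S^{∗∞}), +1, S^{∗∞}) and (σ(S^{∗∞}), −1, S^{∗∞}) are complete S-folding sequences; (ii) every complete S-folding sequence satisfies the local isomorphism property; (iii) any two complete S-folding sequences are locally isomorphic. -/

import Mathlib

/- Common framework for paperfolding curves, coverings of the plane by such
curves, and the local isomorphism property, following F. Oger,
"The number of paperfolding curves in a covering of the plane". -/

namespace Paperfolding

/-- Lattice points: we identify ℝ² with ℂ and ℤ² with the Gaussian integers ℤ+iℤ. -/
abbrev Pt := ℤ × ℤ

/-- Multiplication by `i` (rotation by π/2) on ℤ². -/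
def rot (v : Pt) : Pt := (-v.2, v.1)

/-- Multiplication by `-i` (rotation by -π/2) on ℤ². -/
def rotInv (v : Pt) : Pt := (v.2, -v.1)

/-- `i^a` for `a = ±1`. -/
def rotBy (a : ℤ) (v : Pt) : Pt := if a = 1 then rot v else rotInv v

/-- Complex (Gaussian integer) multiplication on ℤ². -/
def cmul (u v : Pt) : Pt := (u.1 * v.1 - u.2 * v.2, u.1 * v.2 + u.2 * v.1)

/-- The four unit direction vectors `1, -1, i, -i`. -/
def IsUnitVec (v : Pt) : Prop := v = (1, 0) ∨ v = (-1, 0) ∨ v = (0, 1) ∨ v = (0, -1)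

/-- A curve: a (finite, one-sided infinite or bi-infinite) sequence of oriented unit
segments, the `k`-th segment going from `vertex k` to `vertex (k+1)` (for `k, k+1` in
the index interval `dom`), with a turn of ±π/2 at each interior vertex. -/
structure Curve where
  dom : Set ℤ
  isInterval : ∀ ⦃a b c : ℤ⦄, a ∈ dom → c ∈ dom → a ≤ b → b ≤ c → b ∈ dom
  nontrivial : ∃ k, k ∈ dom ∧ k + 1 ∈ dom
  vertex : ℤ → Pt
  step : ∀ k, k ∈ dom → k + 1 ∈ dom → IsUnitVec (vertex (k + 1) - vertex k)
  turn : ∀ k, k ∈ dom → k + 2 ∈ dom →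
    vertex (k + 2) - vertex (k + 1) = rot (vertex (k + 1) - vertex k) ∨
    vertex (k + 2) - vertex (k + 1) = rotInv (vertex (k + 1) - vertex k)

/-- A complete curve is indexed by all of ℤ. -/
def Curve.IsComplete (C : Curve) : Prop := C.dom = Set.univ

/-- `C` has a segment with index `k` (from `vertex k` to `vertex (k+1)`). -/
def Curve.HasSeg (C : Curve) (k : ℤ) : Prop := k ∈ C.dom ∧ k + 1 ∈ C.dom

/-- The curve `C` is associated to the sequence `b` (i.e. `ε_{k+1} = i^{b k} · ε_k`
for consecutive segments `k`, `k+1`). -/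
def Curve.AssocSeq (C : Curve) (b : ℤ → ℤ) : Prop :=
  ∀ k : ℤ, k ∈ C.dom → k + 2 ∈ C.dom →
    C.vertex (k + 2) - C.vertex (k + 1) = rotBy (b k) (C.vertex (k + 1) - C.vertex k)

/-- Segment `k` of `C` has the nonoriented unit segment `[z, z+e]` as support. -/
def SegSupports (C : Curve) (k : ℤ) (z e : Pt) : Prop :=
  (C.vertex k = z ∧ C.vertex (k + 1) = z + e) ∨ (C.vertex k = z + e ∧ C.vertex (k + 1) = z)

/-- A covering: a set of complete curves such that every nonoriented unit segment
of the lattice is the support of exactly one segment of one curve. -/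
def IsCovering (𝒞 : Set Curve) : Prop :=
  (∀ C ∈ 𝒞, C.IsComplete) ∧
  ∀ z e : Pt, (e = (1, 0) ∨ e = (0, 1)) →
    ∃! p : Curve × ℤ, p.1 ∈ 𝒞 ∧ SegSupports p.1 p.2 z e

/-- Segments `k` of `C` and `l` of `D` have the same (nonoriented) support. -/
def SameSeg (C : Curve) (k : ℤ) (D : Curve) (l : ℤ) : Prop :=
  (C.vertex k = D.vertex l ∧ C.vertex (k + 1) = D.vertex (l + 1)) ∨
  (C.vertex k = D.vertex (l + 1) ∧ C.vertex (k + 1) = D.vertex l)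

/-- A self-avoiding curve: distinct segments have distinct supports.  (Since the
curves considered here turn by ±π/2 at every vertex and are rounded at vertices,
two passes of such a curve through a vertex never cross, so this is equivalent to
the geometric notion.) -/
def Curve.SelfAvoiding (C : Curve) : Prop :=
  ∀ k l : ℤ, C.HasSeg k → C.HasSeg l → SameSeg C k C l → k = l

/-- Disjointness of two (rounded) curves: no common segment support. -/
def DisjointCurves (C D : Curve) : Prop :=
  ∀ k l : ℤ, C.HasSeg k → D.HasSeg l → ¬ SameSeg C k D l

/-- The nonoriented segment `[a, b]` is a segment of the curve `C`. -/
def SegOfCurve (C : Curve) (a b : Pt) : Prop :=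
  ∃ k : ℤ, C.HasSeg k ∧
    ((C.vertex k = a ∧ C.vertex (k + 1) = b) ∨ (C.vertex k = b ∧ C.vertex (k + 1) = a))

/-- The nonoriented segment `[a, b]` is a segment of a curve of `𝒟`. -/
def SegInSet (𝒟 : Set Curve) (a b : Pt) : Prop := ∃ C ∈ 𝒟, SegOfCurve C a b

/-! ### Translations, subcurves, patterns and local isomorphism -/

/-- Translation of a curve by a lattice vector. -/
def Curve.translate (t : Pt) (C : Curve) : Curve where
  dom := C.dom
  isInterval := C.isInterval
  nontrivial := C.nontrivial
  vertex := fun k => C.vertex k + t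
  step := fun k h1 h2 => by simpa using C.step k h1 h2
  turn := fun k h1 h2 => by simpa using C.turn k h1 h2

/-- Translation of a set of curves. -/
def translateSet (t : Pt) (𝓕 : Set Curve) : Set Curve := Curve.translate t '' 𝓕

/-- `f` embeds in `C` with index shift `j` (as a subcurve, preserving orientation
and connections). -/
def Embeds (f C : Curve) (j : ℤ) : Prop :=
  ∀ k ∈ f.dom, (k + j ∈ C.dom ∧ f.vertex k = C.vertex (k + j))

/-- `f` is a subcurve of `C`. -/
def IsSubcurveOf (f C : Curve) : Prop := ∃ j : ℤ, Embeds f C j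

/-- A bounded set of curves. -/
def BoundedSet (𝓑 : Set Curve) : Prop :=
  ∃ N : ℕ, ∀ C ∈ 𝓑, ∀ k ∈ C.dom, |(C.vertex k).1| ≤ N ∧ |(C.vertex k).2| ≤ N

/-- A pattern of `𝒞`: a bounded set of subcurves of curves of `𝒞`. -/
def IsPatternOf (P : Set Curve) (𝒞 : Set Curve) : Prop :=
  BoundedSet P ∧ ∀ f ∈ P, ∃ C ∈ 𝒞, IsSubcurveOf f C

/-- All vertices of `C` lie in the square with corner `z` and side `r`. -/
def InSquare (C : Curve) (z : Pt) (r : ℕ) : Prop :=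
  ∀ k ∈ C.dom, z.1 ≤ (C.vertex k).1 ∧ (C.vertex k).1 ≤ z.1 + r ∧
    z.2 ≤ (C.vertex k).2 ∧ (C.vertex k).2 ≤ z.2 + r

/-- The local isomorphism property: every pattern of `𝒞` occurs (up to translation)
in every square of a sufficiently large size. -/
def HasLIP (𝒞 : Set Curve) : Prop :=
  ∀ P : Set Curve, IsPatternOf P 𝒞 → ∃ r : ℕ, 0 < r ∧ ∀ z : Pt, ∃ t : Pt,
    IsPatternOf (translateSet t P) 𝒞 ∧ ∀ f ∈ translateSet t P, InSquare f z r

/-- Two coverings are locally isomorphic if each bounded pattern of either one is,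
up to translation, a pattern of the other. -/
def LocallyIsomorphic (𝒞 𝒟 : Set Curve) : Prop :=
  (∀ P : Set Curve, IsPatternOf P 𝒞 → ∃ t : Pt, IsPatternOf (translateSet t P) 𝒟) ∧
  (∀ P : Set Curve, IsPatternOf P 𝒟 → ∃ t : Pt, IsPatternOf (translateSet t P) 𝒞)

/-! ### The relations `<` and `≪` between sets of curves -/

/-- Segment `k` of `C` belongs to the placed curve `f` (via some embedding of `f`
into `C`). -/
def SegBelongs (f C : Curve) (k : ℤ) : Prop :=
  ∃ j : ℤ, Embeds f C j ∧ f.HasSeg (k - j)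

/-- Segments `k` and `k+1` of `C` are consecutive segments of the placed curve `f`. -/
def SegPairBelongs (f C : Curve) (k : ℤ) : Prop :=
  ∃ j : ℤ, Embeds f C j ∧ f.HasSeg (k - j) ∧ f.HasSeg (k - j + 1)

/-- `𝓕 < 𝒟`: each curve of `𝓕` is contained in a curve of `𝒟`, and any consecutive
segments of a curve of `𝒟` which belong to curves of `𝓕` are consecutive in one of
them. -/
def CurvesLt (𝓕 𝒟 : Set Curve) : Prop :=
  𝓕 ≠ 𝒟 ∧
  (∀ f ∈ 𝓕, ∃ C ∈ 𝒟, IsSubcurveOf f C) ∧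
  (∀ C ∈ 𝒟, ∀ k : ℤ, (∃ f ∈ 𝓕, SegBelongs f C k) → (∃ g ∈ 𝓕, SegBelongs g C (k + 1)) →
    ∃ h ∈ 𝓕, SegPairBelongs h C k)

/-- The three segments completing `[a,b]` to the unit square on the side `p`
(`p` a unit vector perpendicular to `b - a`) all belong to curves of `𝒟`. -/
def FlankSegs (𝒟 : Set Curve) (a b p : Pt) : Prop :=
  SegInSet 𝒟 a (a + p) ∧ SegInSet 𝒟 (a + p) (b + p) ∧ SegInSet 𝒟 b (b + p)

/-- `𝓕 ≪ 𝒟`: `𝓕 < 𝒟` and, for each segment `A` of a curve of `𝓕`, the `6` segments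
which form two squares with `A` belong to curves of `𝒟`. -/
def CurvesLL (𝓕 𝒟 : Set Curve) : Prop :=
  CurvesLt 𝓕 𝒟 ∧
  ∀ f ∈ 𝓕, ∀ k : ℤ, f.HasSeg k →
    FlankSegs 𝒟 (f.vertex k) (f.vertex (k + 1)) (rot (f.vertex (k + 1) - f.vertex k)) ∧
    FlankSegs 𝒟 (f.vertex k) (f.vertex (k + 1)) (rotInv (f.vertex (k + 1) - f.vertex k))

/-! ### ∞-folding sequences and generated coverings -/

/-- `σ(S)`: reverse the finite sequence and change all signs. -/
def sigmaSeq (S : List ℤ) : List ℤ := (S.map fun a => -a).reverse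

/-- The `n`-folding sequences, obtained by folding a strip of paper `n` times. -/
inductive IsNFolding : ℕ → List ℤ → Prop
  | one (a : ℤ) : (a = 1 ∨ a = -1) → IsNFolding 1 [a]
  | succ {n : ℕ} {S : List ℤ} (a : ℤ) : (a = 1 ∨ a = -1) → IsNFolding n S →
      IsNFolding (n + 1) (S ++ a :: sigmaSeq S)

/-- The finite subword `(b k, b (k+1), …, b (k+l-1))` of a bi-infinite sequence. -/
def wordAt (b : ℤ → ℤ) (k : ℤ) (l : ℕ) : List ℤ := List.ofFn fun i : Fin l => b (k + (i : ℕ))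

/-- A complete folding sequence: a bi-infinite sequence all of whose finite
subwords occur in some `n`-folding sequence. -/
def IsCompleteFoldingSeq (b : ℤ → ℤ) : Prop :=
  ∀ k : ℤ, ∀ l : ℕ, ∃ n : ℕ, ∃ S : List ℤ, IsNFolding n S ∧ (wordAt b k l) <:+: S

/-- A complete folding curve: a complete curve associated to a complete folding
sequence. -/
def IsCompleteFoldingCurve (C : Curve) : Prop :=
  C.IsComplete ∧ ∃ b : ℤ → ℤ, C.AssocSeq b ∧ IsCompleteFoldingSeq b

/-- A covering of the plane by complete folding curves. -/
def IsFoldingCovering (𝒞 : Set Curve) : Prop :=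
  IsCovering 𝒞 ∧ ∀ C ∈ 𝒞, IsCompleteFoldingCurve C

/-- An ∞-folding sequence `(a_k)_{k ≥ 1}` (the value at `0` is irrelevant):
`(a_1, …, a_{2^n - 1})` is an `n`-folding sequence for each `n ≥ 1`. -/
def IsInfFolding (a : ℕ → ℤ) : Prop :=
  ∀ n : ℕ, 0 < n → IsNFolding n (List.ofFn fun i : Fin (2 ^ n - 1) => a ((i : ℕ) + 1))

/-- The bi-infinite sequence `(σ(a), ε, a)`: equals `a_k` for `k ≥ 1`, `ε` at `0`,
and `-a_{-k}` for `k ≤ -1`. -/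
def twoSided (a : ℕ → ℤ) (ε : ℤ) : ℤ → ℤ := fun k =>
  if 0 < k then a k.toNat else if k = 0 then ε else -(a (-k).toNat)

/-- A covering generated by a curve associated to the ∞-folding sequence `a`:
a covering which satisfies the local isomorphism property and contains a complete
curve associated to `(σ(a), ε, a)` for some `ε = ±1`. -/
def GeneratedBy (𝒞 : Set Curve) (a : ℕ → ℤ) : Prop :=
  IsCovering 𝒞 ∧ HasLIP 𝒞 ∧ ∃ ε : ℤ, (ε = 1 ∨ ε = -1) ∧ ∃ C ∈ 𝒞, C.AssocSeq (twoSided a ε)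

/-- The derived sequence of an ∞-folding sequence is `(a_{2k})_{k≥1}`; iterating
`k` times gives `(a_{2^k · j})_{j≥1}`. -/
def derivedIter (a : ℕ → ℤ) (k : ℕ) : ℕ → ℤ := fun j => a (2 ^ k * j)

/-- An alternating folding sequence. -/
def IsAlternating (a : ℕ → ℤ) : Prop :=
  IsInfFolding a ∧ ∀ n : ℕ, a (2 ^ (n + 1)) = -(a (2 ^ n))

/-! ### The sets `E_n(𝒞)` and the property `P` -/

/-- A walk of length `L` starting at `z` along a curve of `𝒞` (in either direction):
the nonoriented subcurves with endpoint `z` and length `L`. -/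
def WalkFrom (𝒞 : Set Curve) (z : Pt) (L : ℕ) (w : ℕ → Pt) : Prop :=
  w 0 = z ∧ ∃ C ∈ 𝒞,
    (∃ j : ℤ, ∀ i : ℕ, i ≤ L → (j + (i : ℕ) ∈ C.dom ∧ w i = C.vertex (j + (i : ℕ)))) ∨
    (∃ j : ℤ, ∀ i : ℕ, i ≤ L → (j - (i : ℕ) ∈ C.dom ∧ w i = C.vertex (j - (i : ℕ))))

/-- `E_n(𝒞)`: the set of points `z` such that the four nonoriented subcurves of
curves of `𝒞` with endpoint `z` and length `2^n` are obtained from one of them by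
the rotations of center `z` (equivalently: the set of walks from `z` of length
`2^n` is stable under the rotation of center `z` and angle π/2). -/
def Eset (𝒞 : Set Curve) (n : ℕ) : Set Pt :=
  {z | ∀ w : ℕ → Pt, WalkFrom 𝒞 z (2 ^ n) w →
    WalkFrom 𝒞 z (2 ^ n) (fun i => z + rot (w i - z))}

/-- A diagonal direction. -/
def IsDiag (d : Pt) : Prop := d = (1, 1) ∨ d = (1, -1) ∨ d = (-1, 1) ∨ d = (-1, -1)

/-- A curve of `𝒞` passes through `X` connecting the segments `[X, X+e]` and
`[X, X+f]` (rounding the corner at `X`). -/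
def PassAt (𝒞 : Set Curve) (X e f : Pt) : Prop :=
  ∃ C ∈ 𝒞, ∃ k : ℤ, C.HasSeg k ∧ C.HasSeg (k + 1) ∧ C.vertex (k + 1) = X ∧
    ((C.vertex k = X + e ∧ C.vertex (k + 2) = X + f) ∨
     (C.vertex k = X + f ∧ C.vertex (k + 2) = X + e))

/-- The two unit squares lying in the quadrants `d` and `-d` at their common vertex
`X` are connected at `X`: no curve of `𝒞` rounds the corner at `X` inside either of
these two quadrants, so that the two centers and `X` lie in the same connected
component of the complement of `𝒞`. -/
def SquaresConnected (𝒞 : Set Curve) (X d : Pt) : Prop :=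
  ¬ PassAt 𝒞 X ((d.1 : ℤ), (0 : ℤ)) ((0 : ℤ), (d.2 : ℤ)) ∧
  ¬ PassAt 𝒞 X ((-d.1 : ℤ), (0 : ℤ)) ((0 : ℤ), (-d.2 : ℤ))

/-- Exactly two of three propositions hold. -/
def ExactlyTwo (A B C : Prop) : Prop := (A ∧ B ∧ ¬C) ∨ (A ∧ ¬B ∧ C) ∨ (¬A ∧ B ∧ C)

/-- The property `P(X)`: `X ∈ E_2(𝒞)` and each unit square with vertex `X` is
connected to `2` unit squares without vertex `X` (the candidates being the three
unit squares meeting it at its three corners other than `X`). -/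
def Pprop (𝒞 : Set Curve) (X : Pt) : Prop :=
  X ∈ Eset 𝒞 2 ∧ ∀ d : Pt, IsDiag d →
    ExactlyTwo (SquaresConnected 𝒞 (X + d) d)
      (SquaresConnected 𝒞 (X + ((d.1 : ℤ), (0 : ℤ))) ((d.1 : ℤ), (-d.2 : ℤ)))
      (SquaresConnected 𝒞 (X + ((0 : ℤ), (d.2 : ℤ))) ((d.1 : ℤ), (-d.2 : ℤ)))

/-! ### Density -/

/-- All vertices of `C` lie in the real square `Σ_s(z)`. -/
def InRealSquare (C : Curve) (z : ℝ × ℝ) (s : ℝ) : Prop :=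
  ∀ k ∈ C.dom, z.1 ≤ ((C.vertex k).1 : ℝ) ∧ ((C.vertex k).1 : ℝ) ≤ z.1 + s ∧
    z.2 ≤ ((C.vertex k).2 : ℝ) ∧ ((C.vertex k).2 : ℝ) ≤ z.2 + s

/-- The translates `ℱ` of `ℬ` with `ℱ < 𝒞` and `ℱ ⊆ Σ_s(z)`, indexed by the
translation vector. -/
def occSet (𝒞 ℬ : Set Curve) (z : ℝ × ℝ) (s : ℝ) : Set Pt :=
  {t : Pt | CurvesLt (translateSet t ℬ) 𝒞 ∧ ∀ f ∈ translateSet t ℬ, InRealSquare f z s}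

/-- `ℬ` has density `d` in `𝒞`. -/
def HasDensity (𝒞 ℬ : Set Curve) (d : ℝ) : Prop :=
  ∀ ε : ℝ, 0 < ε → ∃ r : ℝ, 0 < r ∧ ∀ s : ℝ, r ≤ s → ∀ z : ℝ × ℝ,
    s ^ 2 * d * (1 - ε) < ((occSet 𝒞 ℬ z s).ncard : ℝ) ∧
    ((occSet 𝒞 ℬ z s).ncard : ℝ) < s ^ 2 * d * (1 + ε)

/-- No vertex of a curve of `𝒜` lies in `E`. -/
def NoVertexIn (𝒜 : Set Curve) (E : Set Pt) : Prop :=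
  ∀ C ∈ 𝒜, ∀ k ∈ C.dom, C.vertex k ∉ E

/-! ### Derivations -/

/-- Every `z ∈ ℤ+iℤ` is the initial point of two opposite segments. -/
def OppositeSegsEverywhere (𝒞 : Set Curve) : Prop :=
  ∀ z : Pt, ∃ C ∈ 𝒞, ∃ k : ℤ, ∃ D ∈ 𝒞, ∃ l : ℤ, C.HasSeg k ∧ D.HasSeg l ∧
    C.vertex k = z ∧ D.vertex l = z ∧ C.vertex (k + 1) - z = -(D.vertex (l + 1) - z)

/-- The set of `m` consecutive placed segments of `C` starting at index `j`. -/
def run (C : Curve) (j : ℤ) (m : ℕ) : Set (Curve × ℤ) :=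
  {p | p.1 = C ∧ ∃ i : ℕ, i < m ∧ p.2 = j + (i : ℕ)}

/-- `Δ` is a derivation from `𝒞` to `𝒟` with associated finite sequence `L`
(of length `m - 1`): the preimage of each segment `A` of a curve of `𝒟` is a
subcurve of a curve of `𝒞` with `m` segments, associated to `L` or `-L` according
to the parity of `α(A)`; preimages of consecutive segments are consecutive; and a
fixed direct similitude `w ↦ u·w + v` maps `α(A)`, `β(A)` to the initial and
terminal points of the preimage of `A`. -/
def IsDerivationWith (𝒞 𝒟 : Set Curve) (Δ : Curve × ℤ → Curve × ℤ) (L : List ℤ) : Prop :=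
  ∃ u v : Pt, u ≠ (0, 0) ∧
  (∀ p : Curve × ℤ, p.1 ∈ 𝒞 → (Δ p).1 ∈ 𝒟) ∧
  ∀ D ∈ 𝒟, ∀ l : ℤ, ∃ C ∈ 𝒞, ∃ j : ℤ,
    {p : Curve × ℤ | p.1 ∈ 𝒞 ∧ Δ p = (D, l)} = run C j (L.length + 1) ∧
    {p : Curve × ℤ | p.1 ∈ 𝒞 ∧ Δ p = (D, l + 1)} = run C (j + (L.length + 1)) (L.length + 1) ∧
    (∀ i : ℕ, i < L.length →
      C.vertex (j + (i : ℕ) + 2) - C.vertex (j + (i : ℕ) + 1) =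
        rotBy (if Even ((D.vertex l).1 + (D.vertex l).2) then L.getD i 0 else -(L.getD i 0))
          (C.vertex (j + (i : ℕ) + 1) - C.vertex (j + (i : ℕ)))) ∧
    C.vertex j = cmul u (D.vertex l) + v ∧
    C.vertex (j + ((L.length : ℤ) + 1)) = cmul u (D.vertex (l + 1)) + v

/-- `Δ` is a derivation from `𝒞` to `𝒟`. -/
def IsDerivation (𝒞 𝒟 : Set Curve) (Δ : Curve × ℤ → Curve × ℤ) : Prop :=
  ∃ L : List ℤ, L ≠ [] ∧ (∀ a ∈ L, a = 1 ∨ a = -1) ∧ IsDerivationWith 𝒞 𝒟 Δ L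

/-! ### Folding strings (Dekking) -/

/-- A folding string: a finite ±1-sequence. -/
def IsFoldingString (S : List ℤ) : Prop := ∀ a ∈ S, a = 1 ∨ a = -1

/-- Entry `i` (1-based) of the folding convolution `S ∗ T`, where `m = |S| + 1`:
`(S∗T)_{km} = t_k`, and `(S∗T)_{km+j} = s_j` if `k` is even, `-s_{m-j}` if `k`
is odd. -/
def convEntry (S T : List ℤ) (i : ℕ) : ℤ :=
  let m := S.length + 1
  if i % m = 0 then T.getD (i / m - 1) 0
  else if (i / m) % 2 = 0 then S.getD (i % m - 1) 0
  else -(S.getD (m - i % m - 1) 0)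

/-- The folding convolution `S ∗ T` of two folding strings. -/
def foldConv (S T : List ℤ) : List ℤ :=
  List.ofFn fun idx : Fin ((S.length + 1) * (T.length + 1) - 1) => convEntry S T ((idx : ℕ) + 1)

/-- `foldIter S n = S^{∗(n+1)}`. -/
def foldIter (S : List ℤ) : ℕ → List ℤ
  | 0 => S
  | n + 1 => foldConv (foldIter S n) S

/-- `S^{∗∞}` as a function on 1-based indices (each `S^{∗n}` is an initial segment
of `S^{∗(n+1)}`, so the value of entry `i` has stabilized in `S^{∗(i+1)}`). -/
def foldInf (S : List ℤ) (i : ℕ) : ℤ := (foldIter S i).getD (i - 1) 0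

/-- A complete `S`-folding sequence: a bi-infinite sequence each of whose finite
subwords occurs in `S^{∗∞}`. -/
def IsCompleteSFoldingSeq (S : List ℤ) (b : ℤ → ℤ) : Prop :=
  ∀ k : ℤ, ∀ l : ℕ, ∃ j : ℕ, 0 < j ∧ ∀ i : ℕ, i < l → b (k + (i : ℕ)) = foldInf S (j + i)

/-- A complete `S`-folding curve. -/
def IsCompleteSFoldingCurve (S : List ℤ) (C : Curve) : Prop :=
  C.IsComplete ∧ ∃ b : ℤ → ℤ, C.AssocSeq b ∧ IsCompleteSFoldingSeq S b

/-- A (one-sided infinite) curve associated to `S^{∗∞}`, with segments indexed by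
`k ≥ 1`. -/
def IsInfSCurve (S : List ℤ) (C : Curve) : Prop :=
  C.dom = Set.Ici (1 : ℤ) ∧ C.AssocSeq (fun k => foldInf S k.toNat)

/-- `C` covers the lattice square with corner `z` and side `m`: each unit segment
inside that square is the support of a segment of `C`. -/
def CoversSquare (C : Curve) (z : Pt) (m : ℕ) : Prop :=
  ∀ a e : Pt, (e = (1, 0) ∨ e = (0, 1)) →
    z.1 ≤ a.1 → a.1 + e.1 ≤ z.1 + m → z.2 ≤ a.2 → a.2 + e.2 ≤ z.2 + m →
    SegOfCurve C a (a + e)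

/-- `C` covers arbitrarily large squares. -/
def CoversArbLargeSquares (C : Curve) : Prop :=
  ∀ m : ℕ, 0 < m → ∃ z : Pt, CoversSquare C z m

/-- `D` is the image of `C` under `n` quarter turns (rotation of angle `nπ/2`)
about the origin. -/
def RotCopy (n : ℕ) (C D : Curve) : Prop :=
  D.dom = C.dom ∧ ∀ k : ℤ, D.vertex k = rot^[n] (C.vertex k)

/-- The curves of `𝒞` (together) cover the plane: every nonoriented unit segment is
the support of a segment of a curve of `𝒞`. -/
def CoversPlane (𝒞 : Set Curve) : Prop :=
  ∀ z e : Pt, (e = (1, 0) ∨ e = (0, 1)) → SegInSet 𝒞 z (z + e)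

/-- Property 1): every curve associated to `S^{∗∞}` is self-avoiding. -/
def Prop1 (S : List ℤ) : Prop := ∀ C : Curve, IsInfSCurve S C → C.SelfAvoiding

/-- Property 2): every curve associated to `S^{∗∞}` covers arbitrarily large
squares. -/
def Prop2 (S : List ℤ) : Prop := ∀ C : Curve, IsInfSCurve S C → CoversArbLargeSquares C

/-- Property 3) (`S` is perfect): for every curve `C` associated to `S^{∗∞}`
starting at the origin, the four curves obtained from `C` by the rotations of
angles `0, π/2, π, 3π/2` about the origin cover the plane. -/
def Prop3 (S : List ℤ) : Prop :=
  ∀ C D1 D2 D3 : Curve, IsInfSCurve S C → C.vertex 1 = (0, 0) →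
    RotCopy 1 C D1 → RotCopy 2 C D2 → RotCopy 3 C D3 →
    CoversPlane {C, D1, D2, D3}

/-- The complete curve `D` is obtained by connecting the one-sided curves `R`
(traversed forwards, on indices `≥ 1`) and `R'` (traversed backwards) at their
common initial point. -/
def ConnectsPair (D R R' : Curve) : Prop :=
  D.IsComplete ∧ (∀ k : ℤ, 1 ≤ k → D.vertex k = R.vertex k) ∧
  (∀ k : ℤ, 1 ≤ k → D.vertex (2 - k) = R'.vertex k)

/-- The pair of complete curves `(A1, A2)` is obtained by connecting the four
rotated copies `C, D1, D2, D3` of a curve. -/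
def ConnectionOf (C D1 D2 D3 A1 A2 : Curve) : Prop :=
  ∃ i j k l : Fin 4, ({i, j, k, l} : Set (Fin 4)) = Set.univ ∧
    ConnectsPair A1 (![C, D1, D2, D3] i) (![C, D1, D2, D3] j) ∧
    ConnectsPair A2 (![C, D1, D2, D3] k) (![C, D1, D2, D3] l)

/-! ### Equivalence of curves and of sets of curves (up to reindexing/reversal) -/

/-- `C` and `D` are the same curve up to an index shift. -/
def ShiftEq (C D : Curve) : Prop :=
  ∃ j : ℤ, (∀ k : ℤ, k ∈ C.dom ↔ k + j ∈ D.dom) ∧ ∀ k ∈ C.dom, C.vertex k = D.vertex (k + j)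

/-- `C` is the reversal of `D`, up to an index shift. -/
def ReverseShiftEq (C D : Curve) : Prop :=
  ∃ j : ℤ, (∀ k : ℤ, k ∈ C.dom ↔ j - k ∈ D.dom) ∧ ∀ k ∈ C.dom, C.vertex k = D.vertex (j - k)

/-- Two curves are equivalent if they have the same geometric support with the
same connections. -/
def CurveEquiv (C D : Curve) : Prop := ShiftEq C D ∨ ReverseShiftEq C D

/-- Two sets of curves are equivalent if they consist of (pairwise) equivalent
curves. -/
def SetEquivCurves (𝒞 𝒟 : Set Curve) : Prop :=
  (∀ C ∈ 𝒞, ∃ D ∈ 𝒟, CurveEquiv C D) ∧ (∀ D ∈ 𝒟, ∃ C ∈ 𝒞, CurveEquiv C D)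

/-- Two curves have a common vertex. -/
def HaveCommonVertex (C D : Curve) : Prop :=
  ∃ k ∈ C.dom, ∃ l ∈ D.dom, C.vertex k = D.vertex l

/-! ### Inverse images of sets of curves under a derivation -/

/-- The placed segments of `f`, embedded in `C` with shift `j`. -/
def SegsOfAt (f C : Curve) (j : ℤ) : Set (Curve × ℤ) :=
  {p | p.1 = C ∧ ∃ k : ℤ, f.HasSeg k ∧ p.2 = k + j}

/-- `g = Δ⁻¹(f)`: the segments of `g` (placed in `𝒞`) are exactly the `Δ`-preimages
of the segments of `f` (placed in `𝒞`). -/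
def IsInvImageCurve (𝒞 : Set Curve) (Δ : Curve × ℤ → Curve × ℤ) (f g : Curve) : Prop :=
  ∃ C ∈ 𝒞, ∃ jf : ℤ, Embeds f C jf ∧ ∃ D ∈ 𝒞, ∃ jg : ℤ, Embeds g D jg ∧
    SegsOfAt g D jg = {p : Curve × ℤ | p.1 ∈ 𝒞 ∧ Δ p ∈ SegsOfAt f C jf}

/-- `𝓖 = Δ⁻¹(𝓕)` for sets of curves sitting inside `𝒞`. -/
def IsInvImageSet (𝒞 : Set Curve) (Δ : Curve × ℤ → Curve × ℤ) (𝓕 𝓖 : Set Curve) : Prop :=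
  (∀ f ∈ 𝓕, ∃ g ∈ 𝓖, IsInvImageCurve 𝒞 Δ f g) ∧
  (∀ g ∈ 𝓖, ∃ f ∈ 𝓕, IsInvImageCurve 𝒞 Δ f g)

/-! ### Local isomorphism for bi-infinite sequences -/

/-- A bi-infinite sequence satisfies the local isomorphism property if each of its
finite subwords occurs in all of its sufficiently long subwords. -/
def SeqLIP (b : ℤ → ℤ) : Prop :=
  ∀ k : ℤ, ∀ l : ℕ, ∃ r : ℕ, ∀ k' : ℤ, ∃ j : ℤ, k' ≤ j ∧ j + l ≤ k' + r ∧
    ∀ i : ℕ, i < l → b (j + (i : ℕ)) = b (k + (i : ℕ))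

/-- Two bi-infinite sequences are locally isomorphic if every finite subword of
each one occurs in the other. -/
def SeqLocallyIsomorphic (b c : ℤ → ℤ) : Prop :=
  (∀ k : ℤ, ∀ l : ℕ, ∃ j : ℤ, ∀ i : ℕ, i < l → c (j + (i : ℕ)) = b (k + (i : ℕ))) ∧
  (∀ k : ℤ, ∀ l : ℕ, ∃ j : ℤ, ∀ i : ℕ, i < l → b (j + (i : ℕ)) = c (k + (i : ℕ)))


section SFoldAux

variable (S : List ℤ)

private lemma length_foldConv (R : List ℤ) :
    (foldConv R S).length = (R.length + 1) * (S.length + 1) - 1 := by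
  simp [foldConv]

private lemma length_foldIter (n : ℕ) :
    (foldIter S n).length = (S.length + 1) ^ (n + 1) - 1 := by
  induction n with
  | zero => simp [foldIter]
  | succ n ih =>
    have h1 : 1 ≤ (S.length + 1) ^ (n + 1) := Nat.one_le_pow _ _ (by omega)
    have hfc : foldIter S (n + 1) = foldConv (foldIter S n) S := rfl
    rw [hfc, length_foldConv, ih, Nat.sub_add_cancel h1, ← pow_succ]

private lemma getD_foldConv (R : List ℤ) (i : ℕ) (h1 : 1 ≤ i)
    (h2 : i ≤ (R.length + 1) * (S.length + 1) - 1) :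
    (foldConv R S).getD (i - 1) 0 = convEntry R S i := by
  have hlt : i - 1 < (foldConv R S).length := by rw [length_foldConv]; omega
  rw [List.getD_eq_getElem _ _ hlt]
  have h3 : (foldConv R S)[i - 1]'hlt = convEntry R S ((i - 1) + 1) := by
    simp [foldConv]
  rw [h3]
  congr 1
  omega

private lemma convEntry_mul (R : List ℤ) (K j : ℕ) (h1 : 1 ≤ j) (h2 : j ≤ R.length) :
    convEntry R S (K * (R.length + 1) + j) =
      if K % 2 = 0 then R.getD (j - 1) 0 else -(R.getD (R.length + 1 - j - 1) 0) := by
  have hM : 0 < R.length + 1 := Nat.succ_pos _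
  have hmod : (K * (R.length + 1) + j) % (R.length + 1) = j := by
    rw [add_comm, Nat.add_mul_mod_self_right]
    exact Nat.mod_eq_of_lt (by omega)
  have hdiv : (K * (R.length + 1) + j) / (R.length + 1) = K := by
    rw [add_comm, Nat.add_mul_div_right _ _ hM, Nat.div_eq_of_lt (by omega), zero_add]
  simp only [convEntry, hmod, hdiv]
  rw [if_neg (by omega)]

private lemma convEntry_mul0 (R : List ℤ) (K : ℕ) (h1 : 1 ≤ K) :
    convEntry R S (K * (R.length + 1)) = S.getD (K - 1) 0 := by
  have hM : 0 < R.length + 1 := Nat.succ_pos _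
  have hmod : K * (R.length + 1) % (R.length + 1) = 0 := Nat.mul_mod_left _ _
  have hdiv : K * (R.length + 1) / (R.length + 1) = K := Nat.mul_div_cancel K hM
  simp only [convEntry, hmod, hdiv]
  simp

private lemma length_foldIter_mono (n n' : ℕ) (h : n ≤ n') :
    (foldIter S n).length ≤ (foldIter S n').length := by
  rw [length_foldIter, length_foldIter]
  have := Nat.pow_le_pow_right (show 1 ≤ S.length + 1 by omega) (show n + 1 ≤ n' + 1 by omega)
  omega

private lemma getD_foldIter_succ (n i : ℕ) (h1 : 1 ≤ i) (h2 : i ≤ (foldIter S n).length) :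
    (foldIter S (n + 1)).getD (i - 1) 0 = (foldIter S n).getD (i - 1) 0 := by
  have hfc : foldIter S (n + 1) = foldConv (foldIter S n) S := rfl
  have hb : i ≤ ((foldIter S n).length + 1) * (S.length + 1) - 1 := by
    have : ((foldIter S n).length + 1) * 1 ≤ ((foldIter S n).length + 1) * (S.length + 1) :=
      Nat.mul_le_mul_left _ (by omega)
    omega
  rw [hfc, getD_foldConv S _ i h1 hb]
  have := convEntry_mul S (foldIter S n) 0 i h1 h2
  simpa using this

private lemma foldInf_eq (hm : 1 ≤ S.length) (n i : ℕ) (h1 : 1 ≤ i)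
    (h2 : i ≤ (foldIter S n).length) :
    foldInf S i = (foldIter S n).getD (i - 1) 0 := by
  have mono : ∀ n' n'', n' ≤ n'' → i ≤ (foldIter S n').length →
      (foldIter S n'').getD (i - 1) 0 = (foldIter S n').getD (i - 1) 0 := by
    intro n' n'' h hle
    induction n'', h using Nat.le_induction with
    | base => rfl
    | succ n'' hn ih =>
      rw [getD_foldIter_succ S n'' i h1 (hle.trans (length_foldIter_mono S n' n'' hn)), ih]
  have hi : i ≤ (foldIter S i).length := by
    rw [length_foldIter]
    have h2p : i < 2 ^ (i + 1) :=
      lt_of_lt_of_le (Nat.lt_two_pow_self (n := i)) (Nat.pow_le_pow_right (by norm_num) (by omega))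
    have h3p : 2 ^ (i + 1) ≤ (S.length + 1) ^ (i + 1) := Nat.pow_le_pow_left (by omega) _
    omega
  show (foldIter S i).getD (i - 1) 0 = _
  rcases le_total n i with h | h
  · exact mono n i h h2
  · exact (mono i n h hi).symm

private lemma a_base (hm : 1 ≤ S.length) (n K j : ℕ) (hK : K < S.length + 1)
    (hj1 : 1 ≤ j) (hj2 : j < (S.length + 1) ^ n) :
    foldInf S (K * (S.length + 1) ^ n + j) =
      if K % 2 = 0 then foldInf S j else -(foldInf S ((S.length + 1) ^ n - j)) := by
  match n with
  | 0 => simp at hj2; omega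
  | n + 1 =>
    have hlen : (foldIter S n).length = (S.length + 1) ^ (n + 1) - 1 := length_foldIter S n
    have hpow : 1 ≤ (S.length + 1) ^ (n + 1) := Nat.one_le_pow _ _ (by omega)
    have hM : (foldIter S n).length + 1 = (S.length + 1) ^ (n + 1) := by omega
    have hps : (S.length + 1) * (S.length + 1) ^ (n + 1) = (S.length + 1) ^ (n + 2) :=
      (pow_succ' _ _).symm
    have hKb : K * (S.length + 1) ^ (n + 1) ≤ S.length * (S.length + 1) ^ (n + 1) :=
      Nat.mul_le_mul_right _ (by omega)
    have hSm : S.length * (S.length + 1) ^ (n + 1) + (S.length + 1) ^ (n + 1)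
        = (S.length + 1) * (S.length + 1) ^ (n + 1) := by ring
    have hil : K * (S.length + 1) ^ (n + 1) + j ≤ (foldIter S (n + 1)).length := by
      rw [length_foldIter]
      have hee : (S.length + 1) ^ (n + 1 + 1) = (S.length + 1) ^ (n + 2) := rfl
      omega
    rw [foldInf_eq S hm (n + 1) _ (by omega) hil]
    have hfc : foldIter S (n + 1) = foldConv (foldIter S n) S := rfl
    have hb2 : K * (S.length + 1) ^ (n + 1) + j
        ≤ ((foldIter S n).length + 1) * (S.length + 1) - 1 := by
      rw [hM, mul_comm ((S.length + 1) ^ (n + 1)) (S.length + 1), hps]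
      rw [length_foldIter] at hil
      omega
    rw [hfc, getD_foldConv S _ _ (by omega) hb2]
    rw [show K * (S.length + 1) ^ (n + 1) + j = K * ((foldIter S n).length + 1) + j by rw [hM]]
    rw [convEntry_mul S _ K j hj1 (by omega)]
    rw [← foldInf_eq S hm n j hj1 (by omega)]
    rw [show (foldIter S n).length + 1 - j - 1 = ((S.length + 1) ^ (n + 1) - j) - 1 by omega]
    rw [← foldInf_eq S hm n ((S.length + 1) ^ (n + 1) - j) (by omega) (by omega)]

private lemma lemA_aux (hm : 1 ≤ S.length) :
    ∀ p n k j, k < (S.length + 1) ^ p → 1 ≤ j → j < (S.length + 1) ^ n →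
    foldInf S (k * (S.length + 1) ^ n + j) =
      if k % 2 = 0 then foldInf S j else -(foldInf S ((S.length + 1) ^ n - j)) := by
  intro p
  induction p with
  | zero =>
    intro n k j hk hj1 hj2
    have hk0 : k = 0 := by simpa using hk
    subst hk0
    simp
  | succ p ih =>
    intro n k j hk hj1 hj2
    have hm2 : 2 ≤ S.length + 1 := by omega
    have hBpos : 0 < (S.length + 1) ^ p := Nat.one_le_pow _ _ (by omega)
    have hApos : 0 < (S.length + 1) ^ n := Nat.one_le_pow _ _ (by omega)
    set K := k / (S.length + 1) ^ p with hKdef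
    set k' := k % (S.length + 1) ^ p with hk'def
    have hkk : K * (S.length + 1) ^ p + k' = k := Nat.div_add_mod' k ((S.length + 1) ^ p)
    have hK : K < S.length + 1 := by
      rw [hKdef]
      apply Nat.div_lt_of_lt_mul
      calc k < (S.length + 1) ^ (p + 1) := hk
        _ = (S.length + 1) ^ p * (S.length + 1) := pow_succ _ _
    have hk' : k' < (S.length + 1) ^ p := Nat.mod_lt _ hBpos
    have hsum : k * (S.length + 1) ^ n + j
        = K * (S.length + 1) ^ (n + p) + (k' * (S.length + 1) ^ n + j) := by
      rw [← hkk, pow_add]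
      ring
    have hin1 : 1 ≤ k' * (S.length + 1) ^ n + j := by omega
    have hin2 : k' * (S.length + 1) ^ n + j < (S.length + 1) ^ (n + p) := by
      have h1 : k' * (S.length + 1) ^ n ≤ ((S.length + 1) ^ p - 1) * (S.length + 1) ^ n :=
        Nat.mul_le_mul_right _ (by omega)
      have h2 : ((S.length + 1) ^ p - 1) * (S.length + 1) ^ n
          = (S.length + 1) ^ p * (S.length + 1) ^ n - (S.length + 1) ^ n :=
        Nat.sub_one_mul _ _
      have h3 : (S.length + 1) ^ (n + p) = (S.length + 1) ^ p * (S.length + 1) ^ n := by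
        rw [pow_add]; ring
      have h5 : (S.length + 1) ^ n ≤ (S.length + 1) ^ p * (S.length + 1) ^ n :=
        Nat.le_mul_of_pos_left _ hBpos
      omega
    rw [hsum, a_base S hm (n + p) K _ hK hin1 hin2]
    by_cases hKp : K % 2 = 0
    · rw [if_pos hKp, ih n k' j hk' hj1 hj2]
      have h1 : K * (S.length + 1) ^ p % 2 = K % 2 * ((S.length + 1) ^ p % 2) % 2 :=
        Nat.mul_mod _ _ _
      have hpar : k % 2 = k' % 2 := by rw [hKp] at h1; omega
      rw [hpar]
    · rw [if_neg hKp]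
      have hsplit : (S.length + 1) ^ (n + p) - (k' * (S.length + 1) ^ n + j)
          = ((S.length + 1) ^ p - k' - 1) * (S.length + 1) ^ n + ((S.length + 1) ^ n - j) := by
      -- prove by introducing abbreviations and zify
        have hc1 : k' ≤ (S.length + 1) ^ p := by omega
        have hc2 : 1 ≤ (S.length + 1) ^ p - k' := by omega
        have hc3 : j ≤ (S.length + 1) ^ n := by omega
        have hc4 : k' * (S.length + 1) ^ n + j ≤ (S.length + 1) ^ (n + p) := by omega
        zify [hc1, hc2, hc3, hc4]
        rw [pow_add]
        ring
      have hihk : (S.length + 1) ^ p - k' - 1 < (S.length + 1) ^ p := by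
        rw [Nat.sub_sub]; exact Nat.sub_lt hBpos (Nat.succ_pos k')
      have hihj1 : 1 ≤ (S.length + 1) ^ n - j := by omega
      have hihj2 : (S.length + 1) ^ n - j < (S.length + 1) ^ n := by omega
      rw [hsplit, ih n ((S.length + 1) ^ p - k' - 1) ((S.length + 1) ^ n - j) hihk hihj1 hihj2]
      rw [show (S.length + 1) ^ n - ((S.length + 1) ^ n - j) = j by omega]
      have h1 : (K + 1) * (S.length + 1) ^ p % 2 = 0 := by
        rw [Nat.mul_mod, show (K + 1) % 2 = 0 by omega]
        simp
      have h2 : (K + 1) * (S.length + 1) ^ p = K * (S.length + 1) ^ p + (S.length + 1) ^ p := by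
        ring
      have hpar : k % 2 + ((S.length + 1) ^ p - k' - 1) % 2 = 1 := by omega
      by_cases hk2 : k % 2 = 0
      · rw [if_pos hk2, if_neg (by omega)]
        exact neg_neg _
      · rw [if_neg hk2, if_pos (by omega)]

private lemma lemA (hm : 1 ≤ S.length) (k n j : ℕ) (hj1 : 1 ≤ j)
    (hj2 : j < (S.length + 1) ^ n) :
    foldInf S (k * (S.length + 1) ^ n + j) =
      if k % 2 = 0 then foldInf S j else -(foldInf S ((S.length + 1) ^ n - j)) := by
  refine lemA_aux S hm k n k j ?_ hj1 hj2
  calc k < 2 ^ k := Nat.lt_two_pow_self (n := k)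
    _ ≤ (S.length + 1) ^ k := Nat.pow_le_pow_left (by omega) k

private lemma a_mul_single (hm : 1 ≤ S.length) (n K : ℕ) (hK1 : 1 ≤ K)
    (hK2 : K ≤ S.length) :
    foldInf S (K * (S.length + 1) ^ n) = S.getD (K - 1) 0 := by
  match n with
  | 0 =>
    rw [pow_zero, mul_one]
    have h2 : K ≤ (foldIter S 0).length := hK2
    exact foldInf_eq S hm 0 K hK1 h2
  | n + 1 =>
    have hlen : (foldIter S n).length = (S.length + 1) ^ (n + 1) - 1 := length_foldIter S n
    have hpow : 1 ≤ (S.length + 1) ^ (n + 1) := Nat.one_le_pow _ _ (by omega)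
    have hM : (foldIter S n).length + 1 = (S.length + 1) ^ (n + 1) := by omega
    have hps : (S.length + 1) * (S.length + 1) ^ (n + 1) = (S.length + 1) ^ (n + 2) :=
      (pow_succ' _ _).symm
    have hKb : K * (S.length + 1) ^ (n + 1) ≤ S.length * (S.length + 1) ^ (n + 1) :=
      Nat.mul_le_mul_right _ (by omega)
    have hKb1 : (S.length + 1) ^ (n + 1) ≤ K * (S.length + 1) ^ (n + 1) :=
      Nat.le_mul_of_pos_left _ (by omega)
    have hSm : S.length * (S.length + 1) ^ (n + 1) + (S.length + 1) ^ (n + 1)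
        = (S.length + 1) * (S.length + 1) ^ (n + 1) := by ring
    have hil : K * (S.length + 1) ^ (n + 1) ≤ (foldIter S (n + 1)).length := by
      rw [length_foldIter]
      have hee : (S.length + 1) ^ (n + 1 + 1) = (S.length + 1) ^ (n + 2) := rfl
      omega
    rw [foldInf_eq S hm (n + 1) _ (by omega) hil]
    have hfc : foldIter S (n + 1) = foldConv (foldIter S n) S := rfl
    have hb2 : K * (S.length + 1) ^ (n + 1)
        ≤ ((foldIter S n).length + 1) * (S.length + 1) - 1 := by
      rw [hM, mul_comm ((S.length + 1) ^ (n + 1)) (S.length + 1), hps]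
      rw [length_foldIter] at hil
      have hee : (S.length + 1) ^ (n + 1 + 1) = (S.length + 1) ^ (n + 2) := rfl
      omega
    rw [hfc, getD_foldConv S _ _ (by omega) hb2]
    rw [show K * (S.length + 1) ^ (n + 1) = K * ((foldIter S n).length + 1) by rw [hM]]
    exact convEntry_mul0 S _ K hK1

private lemma a_mul_m (hm : 1 ≤ S.length) :
    ∀ q, 1 ≤ q → foldInf S (q * (S.length + 1)) = foldInf S q := by
  intro q
  induction q using Nat.strong_induction_on with
  | _ q ihq =>
    intro hq
    have hm2 : 1 < S.length + 1 := by omega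
    obtain ⟨n, hn⟩ : ∃ n, n = Nat.log (S.length + 1) q := ⟨_, rfl⟩
    have h1 : (S.length + 1) ^ n ≤ q := hn ▸ Nat.pow_log_le_self _ (by omega)
    have h2 : q < (S.length + 1) ^ (n + 1) := hn ▸ Nat.lt_pow_succ_log_self hm2 q
    have hApos : 0 < (S.length + 1) ^ n := Nat.one_le_pow _ _ (by omega)
    obtain ⟨k, hkdef⟩ : ∃ k, k = q / (S.length + 1) ^ n := ⟨_, rfl⟩
    obtain ⟨j, hjdef⟩ : ∃ j, j = q % (S.length + 1) ^ n := ⟨_, rfl⟩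
    have hkk : k * (S.length + 1) ^ n + j = q := by
      rw [hkdef, hjdef]; exact Nat.div_add_mod' q ((S.length + 1) ^ n)
    have hk1 : 1 ≤ k := by
      rw [hkdef]; exact (Nat.one_le_div_iff hApos).mpr h1
    have hkm : k < S.length + 1 := by
      rw [hkdef]
      apply Nat.div_lt_of_lt_mul
      calc q < (S.length + 1) ^ (n + 1) := h2
        _ = (S.length + 1) ^ n * (S.length + 1) := pow_succ _ _
    have hj : j < (S.length + 1) ^ n := by
      rw [hjdef]; exact Nat.mod_lt _ hApos
    clear hkdef hjdef hn
    by_cases hj0 : j = 0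
    · have hq_eq : q = k * (S.length + 1) ^ n := by omega
      have hq_eq2 : q * (S.length + 1) = k * (S.length + 1) ^ (n + 1) := by
        rw [hq_eq, pow_succ]; ring
      rw [hq_eq2, hq_eq, a_mul_single S hm (n + 1) k hk1 (by omega),
        a_mul_single S hm n k hk1 (by omega)]
    · have hj1 : 1 ≤ j := by omega
      have e1 : foldInf S q = if k % 2 = 0 then foldInf S j
          else -(foldInf S ((S.length + 1) ^ n - j)) := by
        rw [← hkk]
        exact lemA S hm k n j hj1 hj
      have hqm : q * (S.length + 1) = k * (S.length + 1) ^ (n + 1) + j * (S.length + 1) := by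
        rw [← hkk, pow_succ]; ring
      have hjm1 : 1 ≤ j * (S.length + 1) := Nat.mul_pos (by omega) (by omega)
      have hjm2 : j * (S.length + 1) < (S.length + 1) ^ (n + 1) := by
        have ha : j * (S.length + 1) ≤ ((S.length + 1) ^ n - 1) * (S.length + 1) :=
          Nat.mul_le_mul_right _ (by omega)
        have hb : ((S.length + 1) ^ n - 1) * (S.length + 1)
            = (S.length + 1) ^ n * (S.length + 1) - (S.length + 1) := Nat.sub_one_mul _ _
        have hc : (S.length + 1) ^ (n + 1) = (S.length + 1) ^ n * (S.length + 1) := pow_succ _ _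
        have hd : (S.length + 1) ≤ (S.length + 1) ^ n * (S.length + 1) :=
          Nat.le_mul_of_pos_left _ hApos
        omega
      have e2 : foldInf S (q * (S.length + 1)) = if k % 2 = 0 then foldInf S (j * (S.length + 1))
          else -(foldInf S ((S.length + 1) ^ (n + 1) - j * (S.length + 1))) := by
        rw [hqm]
        exact lemA S hm k (n + 1) (j * (S.length + 1)) hjm1 hjm2
      have e3 : (S.length + 1) ^ (n + 1) - j * (S.length + 1)
          = ((S.length + 1) ^ n - j) * (S.length + 1) := by
        rw [Nat.sub_mul, pow_succ]
      have hkn : (S.length + 1) ^ n ≤ k * (S.length + 1) ^ n := Nat.le_mul_of_pos_left _ (by omega)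
      have hjq : j < q := by omega
      have ihj : foldInf S (j * (S.length + 1)) = foldInf S j := ihq j hjq hj1
      have hlt2 : (S.length + 1) ^ n - j < q := by omega
      have ihj2 : foldInf S (((S.length + 1) ^ n - j) * (S.length + 1))
          = foldInf S ((S.length + 1) ^ n - j) := ihq ((S.length + 1) ^ n - j) hlt2 (by omega)
      rw [e2, e3, ihj, ihj2, e1]

private lemma a_mul_pow (hm : 1 ≤ S.length) (n : ℕ) :
    ∀ q, 1 ≤ q → foldInf S (q * (S.length + 1) ^ n) = foldInf S q := by
  induction n with
  | zero => intro q hq; rw [pow_zero, mul_one]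
  | succ n ih =>
    intro q hq
    have h1 : q * (S.length + 1) ^ (n + 1) = (q * (S.length + 1)) * (S.length + 1) ^ n := by
      rw [pow_succ]; ring
    have h2 : 1 ≤ q * (S.length + 1) := Nat.mul_le_mul hq (show 1 ≤ S.length + 1 by omega)
    rw [h1, ih _ h2, a_mul_m S hm q hq]

private lemma foldingString_foldConv (R : List ℤ) (hR : IsFoldingString R)
    (hS : IsFoldingString S) : IsFoldingString (foldConv R S) := by
  intro x hx
  rw [foldConv, List.mem_ofFn] at hx
  obtain ⟨idx, hidx⟩ := hx
  have hi1 : 1 ≤ (idx : ℕ) + 1 := by omega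
  have hi2 : (idx : ℕ) + 1 ≤ (R.length + 1) * (S.length + 1) - 1 := by
    have := idx.isLt
    omega
  set i := (idx : ℕ) + 1 with hidef
  have hM : 0 < R.length + 1 := Nat.succ_pos _
  rw [← hidx]
  show convEntry R S i = 1 ∨ convEntry R S i = -1
  rw [convEntry]
  by_cases hc1 : i % (R.length + 1) = 0
  · rw [if_pos hc1]
    have hdvd : (R.length + 1) ∣ i := Nat.dvd_of_mod_eq_zero hc1
    have hge : R.length + 1 ≤ i := Nat.le_of_dvd (by omega) hdvd
    have hdiv1 : 1 ≤ i / (R.length + 1) := (Nat.one_le_div_iff hM).mpr hge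
    have hdiv2 : i / (R.length + 1) < S.length + 1 := by
      apply Nat.div_lt_of_lt_mul
      calc i ≤ (R.length + 1) * (S.length + 1) - 1 := hi2
        _ < (R.length + 1) * (S.length + 1) := by
            have : 0 < (R.length + 1) * (S.length + 1) := by positivity
            omega
    have hlt : i / (R.length + 1) - 1 < S.length := by omega
    rw [List.getD_eq_getElem _ _ hlt]
    exact hS _ (List.getElem_mem _)
  · rw [if_neg hc1]
    have hmlt : i % (R.length + 1) < R.length + 1 := Nat.mod_lt _ hM
    have hm1 : 1 ≤ i % (R.length + 1) := by omega
    by_cases hc2 : (i / (R.length + 1)) % 2 = 0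
    · rw [if_pos hc2]
      have hlt : i % (R.length + 1) - 1 < R.length := by omega
      rw [List.getD_eq_getElem _ _ hlt]
      exact hR _ (List.getElem_mem _)
    · rw [if_neg hc2]
      have hlt : R.length + 1 - i % (R.length + 1) - 1 < R.length := by omega
      rw [List.getD_eq_getElem _ _ hlt]
      rcases hR _ (List.getElem_mem _) with h | h <;> rw [h] <;> [right; left] <;> norm_num

private lemma foldingString_foldIter (hS : IsFoldingString S) (n : ℕ) :
    IsFoldingString (foldIter S n) := by
  induction n with
  | zero => exact hS
  | succ n ih => exact foldingString_foldConv S _ ih hS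

private lemma a_pm (hm : 1 ≤ S.length) (hS : IsFoldingString S) (i : ℕ) (hi : 1 ≤ i) :
    foldInf S i = 1 ∨ foldInf S i = -1 := by
  have hlen : i ≤ (foldIter S i).length := by
    rw [length_foldIter]
    have h2p : i < 2 ^ (i + 1) :=
      lt_of_lt_of_le (Nat.lt_two_pow_self (n := i)) (Nat.pow_le_pow_right (by norm_num) (by omega))
    have h3p : 2 ^ (i + 1) ≤ (S.length + 1) ^ (i + 1) := Nat.pow_le_pow_left (by omega) _
    omega
  have hlt : i - 1 < (foldIter S i).length := by omega
  rw [foldInf_eq S hm i i hi hlen, List.getD_eq_getElem _ _ hlt]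
  exact foldingString_foldIter S hS i _ (List.getElem_mem _)

private lemma a_signs (hm : 1 ≤ S.length) (hS : IsFoldingString S) (ε : ℤ)
    (hε : ε = 1 ∨ ε = -1) :
    ∃ k₀ : ℕ, k₀ % 2 = 0 ∧ 2 ≤ k₀ ∧ foldInf S k₀ = ε := by
  have hN4 : 4 ≤ (S.length + 1) ^ 2 := by
    have : 2 ^ 2 ≤ (S.length + 1) ^ 2 := Nat.pow_le_pow_left (by omega) 2
    omega
  have key : ∀ j : ℕ, 1 ≤ j → j ≤ 2 →
      foldInf S (1 * (S.length + 1) ^ 2 + j) = -(foldInf S ((S.length + 1) ^ 2 - j)) := by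
    intro j h1 h2
    rw [lemA S hm 1 2 j h1 (by omega)]
    norm_num
  obtain ⟨j, hj1, hj2, hp1, hp2⟩ : ∃ j : ℕ, 1 ≤ j ∧ j ≤ 2 ∧
      ((S.length + 1) ^ 2 + j) % 2 = 0 ∧ ((S.length + 1) ^ 2 - j) % 2 = 0 :=
    ⟨2 - (S.length + 1) ^ 2 % 2, by omega, by omega, by omega, by omega⟩
  have hk := key _ hj1 hj2
  rw [one_mul] at hk
  have hpm := a_pm S hm hS ((S.length + 1) ^ 2 - j) (by omega)
  rcases hε with rfl | rfl
  · rcases hpm with h | h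
    · exact ⟨(S.length + 1) ^ 2 - j, hp2, by omega, h⟩
    · exact ⟨(S.length + 1) ^ 2 + j, hp1, by omega, by rw [hk, h]; norm_num⟩
  · rcases hpm with h | h
    · exact ⟨(S.length + 1) ^ 2 + j, hp1, by omega, by rw [hk, h]⟩
    · exact ⟨(S.length + 1) ^ 2 - j, hp2, by omega, h⟩

private lemma complete_twoSided (hm : 1 ≤ S.length) (hS : IsFoldingString S) (ε : ℤ)
    (hε : ε = 1 ∨ ε = -1) :
    IsCompleteSFoldingSeq S (twoSided (foldInf S) ε) := by
  obtain ⟨k₀, hk₀2, hk₀ge, hk₀a⟩ := a_signs S hm hS ε hε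
  intro k l
  obtain ⟨n, hn⟩ : ∃ n : ℕ, k.natAbs + l + 1 < (S.length + 1) ^ n := by
    refine ⟨k.natAbs + l + 1, ?_⟩
    calc k.natAbs + l + 1 < 2 ^ (k.natAbs + l + 1) := Nat.lt_two_pow_self
      _ ≤ (S.length + 1) ^ (k.natAbs + l + 1) := Nat.pow_le_pow_left (by omega) _
  have hN1 : 1 ≤ (S.length + 1) ^ n := Nat.one_le_pow _ _ (by omega)
  have hP : 2 * (S.length + 1) ^ n ≤ k₀ * (S.length + 1) ^ n := Nat.mul_le_mul_right _ hk₀ge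
  have hsub : (k₀ - 1) * (S.length + 1) ^ n + (S.length + 1) ^ n = k₀ * (S.length + 1) ^ n := by
    have h0 : k₀ - 1 + 1 = k₀ := by omega
    calc (k₀ - 1) * (S.length + 1) ^ n + (S.length + 1) ^ n
        = (k₀ - 1 + 1) * (S.length + 1) ^ n := by ring
      _ = k₀ * (S.length + 1) ^ n := by rw [h0]
  obtain ⟨J, hJdef⟩ : ∃ J : ℕ, (J : ℤ) = (k₀ * (S.length + 1) ^ n : ℕ) + k :=
    ⟨((k₀ * (S.length + 1) ^ n : ℕ) + k).toNat, Int.toNat_of_nonneg (by omega)⟩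
  refine ⟨J, by omega, ?_⟩
  intro i hi
  simp only [twoSided]
  rcases lt_trichotomy (k + (i : ℕ) : ℤ) 0 with hq | hq | hq
  · rw [if_neg (by omega), if_neg (by omega)]
    have hu1 : 1 ≤ (-(k + (i : ℕ))).toNat := by omega
    have hu2 : (-(k + (i : ℕ))).toNat ≤ (S.length + 1) ^ n - 1 := by omega
    have hidx : J + i = (k₀ - 1) * (S.length + 1) ^ n
        + ((S.length + 1) ^ n - (-(k + (i : ℕ))).toNat) := by omega
    rw [hidx, lemA S hm (k₀ - 1) n _ (by omega) (by omega), if_neg (by omega)]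
    rw [show (S.length + 1) ^ n - ((S.length + 1) ^ n - (-(k + (i : ℕ))).toNat)
      = (-(k + (i : ℕ))).toNat by omega]
  · rw [if_neg (by omega), if_pos hq]
    have hidx : J + i = k₀ * (S.length + 1) ^ n := by omega
    rw [hidx, a_mul_pow S hm n k₀ (by omega), hk₀a]
  · rw [if_pos hq]
    have hu1 : 1 ≤ (k + (i : ℕ)).toNat := by omega
    have hu2 : (k + (i : ℕ)).toNat < (S.length + 1) ^ n := by omega
    have hidx : J + i = k₀ * (S.length + 1) ^ n + (k + (i : ℕ)).toNat := by omega
    rw [hidx, lemA S hm k₀ n _ hu1 hu2, if_pos hk₀2]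

private lemma recurrence (hm : 1 ≤ S.length) (j₀ l : ℕ) (hj₀ : 1 ≤ j₀) :
    ∃ r : ℕ, l ≤ r ∧ ∀ p : ℕ, 1 ≤ p → ∃ q : ℕ, p ≤ q ∧ q + l ≤ p + r ∧
      ∀ i : ℕ, i < l → foldInf S (q + i) = foldInf S (j₀ + i) := by
  obtain ⟨n, hn⟩ : ∃ n : ℕ, j₀ + l < (S.length + 1) ^ n := by
    refine ⟨j₀ + l, ?_⟩
    calc j₀ + l < 2 ^ (j₀ + l) := Nat.lt_two_pow_self
      _ ≤ (S.length + 1) ^ (j₀ + l) := Nat.pow_le_pow_left (by omega) _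
  have hN1 : 1 ≤ (S.length + 1) ^ n := Nat.one_le_pow _ _ (by omega)
  refine ⟨3 * (S.length + 1) ^ n, by omega, ?_⟩
  intro p hp
  obtain ⟨t, htd⟩ : ∃ t, t = (p - 1) / (2 * (S.length + 1) ^ n) + 1 := ⟨_, rfl⟩
  have hdm := Nat.div_add_mod (p - 1) (2 * (S.length + 1) ^ n)
  have hmod := Nat.mod_lt (p - 1) (show 0 < 2 * (S.length + 1) ^ n by omega)
  have hteq : 2 * t * (S.length + 1) ^ n
      = 2 * (S.length + 1) ^ n * ((p - 1) / (2 * (S.length + 1) ^ n))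
        + 2 * (S.length + 1) ^ n := by
    rw [htd]; ring
  have ht1 : p ≤ 2 * t * (S.length + 1) ^ n := by omega
  have ht2 : 2 * t * (S.length + 1) ^ n ≤ p + 2 * (S.length + 1) ^ n - 1 := by omega
  refine ⟨2 * t * (S.length + 1) ^ n + j₀, by omega, by omega, ?_⟩
  intro i hi
  rw [show 2 * t * (S.length + 1) ^ n + j₀ + i
    = 2 * t * (S.length + 1) ^ n + (j₀ + i) by omega]
  rw [lemA S hm (2 * t) n (j₀ + i) (by omega) (by omega), if_pos (by omega)]

private lemma seqLIP_of_complete (hm : 1 ≤ S.length) (b : ℤ → ℤ)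
    (hb : IsCompleteSFoldingSeq S b) : SeqLIP b := by
  intro k l
  obtain ⟨j₀, hj₀, hocc⟩ := hb k l
  obtain ⟨r, hrl, hrec⟩ := recurrence S hm j₀ l hj₀
  refine ⟨r, ?_⟩
  intro k'
  obtain ⟨j₁, hj₁, hocc'⟩ := hb k' r
  obtain ⟨q, hq1, hq2, hq3⟩ := hrec j₁ hj₁
  refine ⟨k' + (q - j₁ : ℕ), by omega, by push_cast; omega, ?_⟩
  intro i hi
  have h1 : k' + ((q - j₁ : ℕ) : ℤ) + (i : ℕ) = k' + ((q - j₁ + i : ℕ) : ℤ) := by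
    push_cast; omega
  rw [h1, hocc' (q - j₁ + i) (by omega),
    show j₁ + (q - j₁ + i) = q + i by omega, hq3 i hi]
  exact (hocc i hi).symm

private lemma locIso_of_complete (hm : 1 ≤ S.length) (b c : ℤ → ℤ)
    (hb : IsCompleteSFoldingSeq S b) (hc : IsCompleteSFoldingSeq S c) :
    SeqLocallyIsomorphic b c := by
  have main : ∀ b c : ℤ → ℤ, IsCompleteSFoldingSeq S b → IsCompleteSFoldingSeq S c →
      ∀ k : ℤ, ∀ l : ℕ, ∃ j : ℤ, ∀ i : ℕ, i < l → c (j + (i : ℕ)) = b (k + (i : ℕ)) := by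
    intro b c hb hc k l
    obtain ⟨j₀, hj₀, hocc⟩ := hb k l
    obtain ⟨r, hrl, hrec⟩ := recurrence S hm j₀ l hj₀
    obtain ⟨j₁, hj₁, hocc'⟩ := hc 0 r
    obtain ⟨q, hq1, hq2, hq3⟩ := hrec j₁ hj₁
    refine ⟨(q - j₁ : ℕ), ?_⟩
    intro i hi
    have h1 : ((q - j₁ : ℕ) : ℤ) + (i : ℕ) = 0 + ((q - j₁ + i : ℕ) : ℤ) := by
      push_cast; omega
    rw [h1, hocc' (q - j₁ + i) (by omega),
      show j₁ + (q - j₁ + i) = q + i by omega, hq3 i hi]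
    exact (hocc i hi).symm
  exact ⟨main b c hb hc, main c b hc hb⟩

end SFoldAux


/-- (i) `(σ(S^{∗∞}), ±1, S^{∗∞})` are complete `S`-folding sequences; (ii) every
complete `S`-folding sequence satisfies the local isomorphism property; (iii) any
two complete `S`-folding sequences are locally isomorphic. -/
theorem sfolding_sequences (S : List ℤ) (hS : IsFoldingString S) (hne : S ≠ []) :
    (IsCompleteSFoldingSeq S (twoSided (foldInf S) 1) ∧
      IsCompleteSFoldingSeq S (twoSided (foldInf S) (-1))) ∧
    (∀ b : ℤ → ℤ, IsCompleteSFoldingSeq S b → SeqLIP b) ∧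
    (∀ b c : ℤ → ℤ, IsCompleteSFoldingSeq S b → IsCompleteSFoldingSeq S c →
      SeqLocallyIsomorphic b c) := by
  have hm : 1 ≤ S.length := List.length_pos_iff.mpr hne
  exact ⟨⟨complete_twoSided S hm hS 1 (Or.inl rfl), complete_twoSided S hm hS (-1) (Or.inr rfl)⟩,
    fun b hb => seqLIP_of_complete S hm b hb,
    fun b c hb hc => locIso_of_complete S hm b c hb hc⟩

end Paperfolding
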